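/- Optimal revelation time in the simple example with an undiscounted principal: let δ > 0 and let ν be a Borel probability measure on [0,∞) such that for every t ≥ 0, ∫_{(t,∞)} e^{-δs} dν(s) ≥ (1/2)·e^{-δt}·ν((t,∞)). Then ∫_{[0,∞)} s dν(s) ≤ 1/δ. Moreover, the exponential distribution with rate δ (the measure with density s ↦ δ·e^{-δs} on [0,∞)) satisfies every one of these constraints with equality and attains ∫ s dν(s) = 1/δ. -/

import Mathlib

open MeasureTheory Set

noncomputable section
open MeasureTheory Set Filter

/-- ∫ x in Ioi a, exp(-(c x)) = exp(-(c a))/c -/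
lemma my_exp_int (c a : ℝ) (hc : 0 < c) :
    ∫ x in Ioi a, Real.exp (-(c * x)) = Real.exp (-(c * a)) / c := by
  have hderiv : ∀ x ∈ Ici a, HasDerivAt (fun x => -Real.exp (-(c * x)) / c)
      (Real.exp (-(c * x))) x := by
    intro x _
    have h1 : HasDerivAt (fun x : ℝ => -(c * x)) (-c) x := by
      have h := ((hasDerivAt_id x).const_mul c).neg; rw [mul_one] at h; exact h
    have h2 := (Real.hasDerivAt_exp (-(c * x))).comp x h1
    have h3 := (h2.neg).div_const c
    exact h3.congr_deriv (by field_simp)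
  have htend : Tendsto (fun x => -Real.exp (-(c * x)) / c) atTop (nhds 0) := by
    have h1 : Tendsto (fun x : ℝ => c * x) atTop atTop :=
      Tendsto.const_mul_atTop hc tendsto_id
    have h2 : Tendsto (fun x : ℝ => Real.exp (-(c * x))) atTop (nhds 0) := by
      exact Real.tendsto_exp_neg_atTop_nhds_zero.comp h1
    have := (h2.neg).div_const c
    simpa using this
  have := integral_Ioi_of_hasDerivAt_of_nonneg' hderiv
    (fun x _ => (Real.exp_pos _).le) htend
  rw [this]; ring

lemma my_exp_integrable (c a : ℝ) (hc : 0 < c) :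
    IntegrableOn (fun x => Real.exp (-(c * x))) (Ioi a) := by
  have hderiv : ∀ x ∈ Ici a, HasDerivAt (fun x => -Real.exp (-(c * x)) / c)
      (Real.exp (-(c * x))) x := by
    intro x _
    have h1 : HasDerivAt (fun x : ℝ => -(c * x)) (-c) x := by
      have h := ((hasDerivAt_id x).const_mul c).neg; rw [mul_one] at h; exact h
    have h2 := (Real.hasDerivAt_exp (-(c * x))).comp x h1
    have h3 := (h2.neg).div_const c
    exact h3.congr_deriv (by field_simp)
  have htend : Tendsto (fun x => -Real.exp (-(c * x)) / c) atTop (nhds 0) := by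
    have h1 : Tendsto (fun x : ℝ => c * x) atTop atTop :=
      Tendsto.const_mul_atTop hc tendsto_id
    have h2 : Tendsto (fun x : ℝ => Real.exp (-(c * x))) atTop (nhds 0) :=
      Real.tendsto_exp_neg_atTop_nhds_zero.comp h1
    simpa using (h2.neg).div_const c
  exact integrableOn_Ioi_deriv_of_nonneg' hderiv (fun x _ => (Real.exp_pos _).le) htend

lemma my_exp_lint (c a : ℝ) (hc : 0 < c) :
    ∫⁻ x in Ioi a, ENNReal.ofReal (Real.exp (-(c * x))) =
      ENNReal.ofReal (Real.exp (-(c * a)) / c) := by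
  rw [← my_exp_int c a hc]
  rw [← ofReal_integral_eq_lintegral_ofReal (my_exp_integrable c a hc)
    (ae_of_all _ fun x => (Real.exp_pos _).le)]

lemma my_moment_deriv (c : ℝ) (hc : 0 < c) (x : ℝ) :
    HasDerivAt (fun x => -((x + 1/c) * Real.exp (-(c * x))))
      (c * x * Real.exp (-(c * x))) x := by
  have h1 : HasDerivAt (fun x : ℝ => -(c * x)) (-c) x := by
    have h := ((hasDerivAt_id x).const_mul c).neg; rw [mul_one] at h; exact h
  have h2 := (Real.hasDerivAt_exp (-(c * x))).comp x h1
  have h3 : HasDerivAt (fun x : ℝ => x + 1/c) 1 x := by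
    simpa using (hasDerivAt_id x).add_const (1/c)
  have h4 := (h3.mul h2).neg
  exact h4.congr_deriv (by simp only [Function.comp_apply]; field_simp; ring)

lemma my_moment_tendsto (c : ℝ) (hc : 0 < c) :
    Tendsto (fun x => -((x + 1/c) * Real.exp (-(c * x)))) atTop (nhds 0) := by
  have h1 : Tendsto (fun x : ℝ => c * x) atTop atTop :=
    Tendsto.const_mul_atTop hc tendsto_id
  have key : Tendsto (fun y : ℝ => (y/c + 1/c) * Real.exp (-y)) atTop (nhds 0) := by
    have hy : Tendsto (fun y : ℝ => y * Real.exp (-y)) atTop (nhds 0) := by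
      simpa using Real.tendsto_pow_mul_exp_neg_atTop_nhds_zero 1
    have he : Tendsto (fun y : ℝ => Real.exp (-y)) atTop (nhds 0) := by
      simpa using Real.tendsto_exp_neg_atTop_nhds_zero
    have := ((hy.div_const c).add (he.const_mul (1/c)))
    have h2 : (fun y : ℝ => (y/c + 1/c) * Real.exp (-y)) =
        fun y : ℝ => y * Real.exp (-y) / c + (1/c) * Real.exp (-y) := by
      funext y; ring
    rw [h2]; simpa using this
  have := (key.comp h1).neg
  simp only [Function.comp] at this
  have h2 : (fun x : ℝ => -((c * x / c + 1/c) * Real.exp (-(c * x)))) =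
      fun x : ℝ => -((x + 1/c) * Real.exp (-(c * x))) := by
    funext x; rw [mul_div_cancel_left₀ _ (ne_of_gt hc)]
  rw [h2] at this
  simpa using this

lemma my_moment_int (c : ℝ) (hc : 0 < c) :
    ∫ x in Ioi (0:ℝ), c * x * Real.exp (-(c * x)) = 1 / c := by
  have := integral_Ioi_of_hasDerivAt_of_nonneg'
    (g := fun x => -((x + 1/c) * Real.exp (-(c * x))))
    (fun x _ => my_moment_deriv c hc x)
    (fun x hx => by have h0 : (0:ℝ) < x := hx; positivity)
    (my_moment_tendsto c hc)
  rw [this]; simp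

lemma my_moment_integrable (c : ℝ) (hc : 0 < c) :
    IntegrableOn (fun x => c * x * Real.exp (-(c * x))) (Ioi (0:ℝ)) :=
  integrableOn_Ioi_deriv_of_nonneg'
    (g := fun x => -((x + 1/c) * Real.exp (-(c * x))))
    (fun x _ => my_moment_deriv c hc x)
    (fun x hx => by have h0 : (0:ℝ) < x := hx; positivity)
    (my_moment_tendsto c hc)

lemma my_fin_int (c s : ℝ) (hc : 0 < c) :
    ∫⁻ t in Ioo 0 s, ENNReal.ofReal (c * Real.exp (c * t)) =
      ENNReal.ofReal (Real.exp (c * s) - 1) := by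
  rcases le_or_gt s 0 with hs | hs
  · rw [Ioo_eq_empty (by linarith), Measure.restrict_empty, lintegral_zero_measure]
    symm
    rw [ENNReal.ofReal_eq_zero]
    have : Real.exp (c * s) ≤ 1 := by
      rw [← Real.exp_zero]; exact Real.exp_le_exp.2 (by nlinarith)
    linarith
  · have hderiv : ∀ t ∈ uIcc (0:ℝ) s, HasDerivAt (fun t => Real.exp (c * t))
        (c * Real.exp (c * t)) t := by
      intro t _
      have h1 : HasDerivAt (fun t : ℝ => c * t) c t := by
        simpa using (hasDerivAt_id t).const_mul c
      have := (Real.hasDerivAt_exp (c * t)).comp t h1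
      exact this.congr_deriv (mul_comm _ _)
    have hint : IntervalIntegrable (fun t => c * Real.exp (c * t)) volume 0 s :=
      (Continuous.intervalIntegrable (by continuity) 0 s)
    have hFTC := intervalIntegral.integral_eq_sub_of_hasDerivAt hderiv hint
    have hioo : ∫ t in Ioo (0:ℝ) s, c * Real.exp (c * t) = Real.exp (c * s) - 1 := by
      rw [← MeasureTheory.integral_Ioc_eq_integral_Ioo,
        ← intervalIntegral.integral_of_le hs.le, hFTC]
      simp
    rw [← hioo, ← ofReal_integral_eq_lintegral_ofReal]
    · exact ((Continuous.integrableOn_Icc (by continuity)).mono_set Ioo_subset_Icc_self)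
    · exact ae_of_all _ fun x => by positivity
open MeasureTheory Set Filter

section Part2
variable (δ : ℝ) (hδ : 0 < δ)

lemma dens_meas (δ : ℝ) : Measurable (fun s : ℝ => ENNReal.ofReal (δ * Real.exp (-δ * s))) := by
  apply Measurable.ennreal_ofReal
  exact (continuous_const.mul (Real.continuous_exp.comp (continuous_const.mul continuous_id))).measurable

lemma nuexp_Ioi (t : ℝ) (ht : 0 ≤ t) (hδ : 0 < δ) :
    ((volume.restrict (Ioi (0:ℝ))).withDensity fun s => ENNReal.ofReal (δ * Real.exp (-δ * s)))
      (Ioi t) = ENNReal.ofReal (Real.exp (-δ * t)) := by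
  rw [withDensity_apply _ measurableSet_Ioi, Measure.restrict_restrict measurableSet_Ioi]
  rw [inter_eq_self_of_subset_left (Ioi_subset_Ioi ht)]
  have : ∀ s : ℝ, ENNReal.ofReal (δ * Real.exp (-δ * s)) =
      ENNReal.ofReal δ * ENNReal.ofReal (Real.exp (-(δ * s))) := by
    intro s
    rw [← ENNReal.ofReal_mul hδ.le]; ring_nf
  simp_rw [this]
  rw [lintegral_const_mul' _ _ ENNReal.ofReal_ne_top, my_exp_lint δ t hδ,
    ← ENNReal.ofReal_mul hδ.le]
  congr 1
  field_simp

lemma nuexp_prob (hδ : 0 < δ) :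
    IsProbabilityMeasure ((volume.restrict (Ioi (0:ℝ))).withDensity
      fun s => ENNReal.ofReal (δ * Real.exp (-δ * s))) := by
  constructor
  have h0 : ((volume.restrict (Ioi (0:ℝ))).withDensity
      fun s => ENNReal.ofReal (δ * Real.exp (-δ * s))) univ
      ≥ ((volume.restrict (Ioi (0:ℝ))).withDensity
      fun s => ENNReal.ofReal (δ * Real.exp (-δ * s))) (Ioi 0) := measure_mono (subset_univ _)
  have key := nuexp_Ioi δ 0 le_rfl hδ
  -- univ version: measure univ = measure (Ioi 0) since density supported there
  have huniv : ((volume.restrict (Ioi (0:ℝ))).withDensity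
      fun s => ENNReal.ofReal (δ * Real.exp (-δ * s))) univ
      = ∫⁻ s in Ioi (0:ℝ), ENNReal.ofReal (δ * Real.exp (-δ * s)) := by
    rw [withDensity_apply _ MeasurableSet.univ, Measure.restrict_univ]
  have hIoi : ((volume.restrict (Ioi (0:ℝ))).withDensity
      fun s => ENNReal.ofReal (δ * Real.exp (-δ * s))) (Ioi 0)
      = ∫⁻ s in Ioi (0:ℝ), ENNReal.ofReal (δ * Real.exp (-δ * s)) := by
    rw [withDensity_apply _ measurableSet_Ioi, Measure.restrict_restrict measurableSet_Ioi,
      inter_self]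
  rw [huniv, ← hIoi, key]
  simp

lemma nuexp_Iio (hδ : 0 < δ) :
    ((volume.restrict (Ioi (0:ℝ))).withDensity
      fun s => ENNReal.ofReal (δ * Real.exp (-δ * s))) (Iio 0) = 0 := by
  rw [withDensity_apply _ measurableSet_Iio, Measure.restrict_restrict measurableSet_Iio]
  have : Iio (0:ℝ) ∩ Ioi 0 = ∅ := by
    ext x; simp; intro h; linarith
  rw [this, Measure.restrict_empty, lintegral_zero_measure]

lemma nuexp_constraint (hδ : 0 < δ) (t : ℝ) (ht : 0 ≤ t) :
    ∫ s in Ioi t, Real.exp (-δ * s)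
      ∂((volume.restrict (Ioi (0:ℝ))).withDensity
        fun s => ENNReal.ofReal (δ * Real.exp (-δ * s)))
      = (1/2 : ℝ) * Real.exp (-(2*δ) * t) := by
  have hgc : Continuous (fun s : ℝ => Real.exp (-δ * s)) := by continuity
  rw [restrict_withDensity measurableSet_Ioi, Measure.restrict_restrict measurableSet_Ioi,
    inter_eq_self_of_subset_left (Ioi_subset_Ioi ht)]
  rw [integral_eq_lintegral_of_nonneg_ae (ae_of_all _ fun s => (Real.exp_pos _).le)
    hgc.aestronglyMeasurable]
  rw [lintegral_withDensity_eq_lintegral_mul _ (dens_meas δ)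
    hgc.measurable.ennreal_ofReal]
  have heq : ∀ s : ℝ, ENNReal.ofReal (δ * Real.exp (-δ * s)) * ENNReal.ofReal (Real.exp (-δ * s))
      = ENNReal.ofReal δ * ENNReal.ofReal (Real.exp (-(2 * δ * s))) := by
    intro s
    rw [← ENNReal.ofReal_mul (by positivity), ← ENNReal.ofReal_mul hδ.le]
    congr 1
    rw [mul_assoc, ← Real.exp_add]
    congr 2
    ring
  simp only [Pi.mul_apply]
  simp_rw [heq]
  rw [lintegral_const_mul' _ _ ENNReal.ofReal_ne_top]
  have h2δ : (0:ℝ) < 2 * δ := by linarith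
  have hkey := my_exp_lint (2*δ) t h2δ
  rw [show (fun s:ℝ => ENNReal.ofReal (Real.exp (-(2*δ*s)))) =
      fun s:ℝ => ENNReal.ofReal (Real.exp (-(2*δ)*s)) from funext fun s => by ring_nf] at *
  rw [show ∀ x:ℝ, -(2*δ*x) = -(2*δ)*x from fun x => by ring] at hkey
  rw [hkey, ← ENNReal.ofReal_mul hδ.le, ENNReal.toReal_ofReal (by positivity)]
  field_simp

lemma nuexp_moment (hδ : 0 < δ) :
    ∫⁻ s, ENNReal.ofReal s
      ∂((volume.restrict (Ioi (0:ℝ))).withDensity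
        fun s => ENNReal.ofReal (δ * Real.exp (-δ * s)))
      = ENNReal.ofReal (1/δ) := by
  rw [lintegral_withDensity_eq_lintegral_mul _ (dens_meas δ)
    ((by measurability : Measurable fun s : ℝ => ENNReal.ofReal s))]
  simp only [Pi.mul_apply]
  have heq : ∀ s : ℝ, s ∈ Ioi (0:ℝ) →
      ENNReal.ofReal (δ * Real.exp (-δ * s)) * ENNReal.ofReal s
      = ENNReal.ofReal (δ * s * Real.exp (-(δ * s))) := by
    intro s hs
    rw [← ENNReal.ofReal_mul (by positivity)]
    congr 1
    ring_nf
  rw [setLIntegral_congr_fun measurableSet_Ioi heq]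
  rw [← ofReal_integral_eq_lintegral_ofReal (my_moment_integrable δ hδ)
    ((ae_restrict_iff' measurableSet_Ioi).2 (ae_of_all _ fun x hx => by
      have h0 : (0:ℝ) < x := hx; positivity))]
  rw [my_moment_int δ hδ]

end Part2

section Part1
open ENNReal

lemma part1_main (δ : ℝ) (hδ : 0 < δ) (ν : Measure ℝ) (hprob : IsProbabilityMeasure ν)
    (hno : ν (Iio 0) = 0)
    (h : ∀ t : ℝ, 0 ≤ t →
      (1/2 : ℝ) * Real.exp (-δ * t) * (ν (Ioi t)).toReal
        ≤ ∫ s in Ioi t, Real.exp (-δ * s) ∂ν) :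
    ∫⁻ s, ENNReal.ofReal s ∂ν ≤ ENNReal.ofReal (1/δ) := by
  set g : ℝ → ℝ≥0∞ := fun s => ENNReal.ofReal (Real.exp (-δ * s)) with hg
  have hgc : Continuous (fun s : ℝ => Real.exp (-δ * s)) := by continuity
  have hgmeas : Measurable g := hgc.measurable.ennreal_ofReal
  have haenn : 0 ≤ᵐ[ν] (id : ℝ → ℝ) := by
    rw [Filter.EventuallyLE, ae_iff]
    convert hno using 2
    ext s; simp [not_le]
  -- layer cake
  have hlayer : ∫⁻ s, ENNReal.ofReal s ∂ν = ∫⁻ t in Ioi (0:ℝ), ν (Ioi t) := by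
    have := lintegral_eq_lintegral_meas_lt ν haenn aemeasurable_id
    exact this
  set L : ℝ≥0∞ := ∫⁻ t in Ioi (0:ℝ), ν (Ioi t) with hL
  -- integrability of the discount factor on tails
  have hInt : ∀ t : ℝ, 0 ≤ t → IntegrableOn (fun s => Real.exp (-δ * s)) (Ioi t) ν := by
    intro t ht
    apply Integrable.mono' (integrable_const (1:ℝ)) hgc.aestronglyMeasurable.restrict
    refine (ae_restrict_iff' measurableSet_Ioi).2 (ae_of_all _ fun s hs => ?_)
    rw [Real.norm_eq_abs, abs_of_pos (Real.exp_pos _), ← Real.exp_zero]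
    apply Real.exp_le_exp.2
    have : (0:ℝ) < s := lt_of_le_of_lt ht hs
    nlinarith
  have hIt : ∀ t : ℝ, 0 ≤ t →
      ∫⁻ s in Ioi t, g s ∂ν = ENNReal.ofReal (∫ s in Ioi t, Real.exp (-δ * s) ∂ν) := by
    intro t ht
    rw [ofReal_integral_eq_lintegral_ofReal (hInt t ht) (ae_of_all _ fun s => (Real.exp_pos _).le)]
  -- pointwise weighted constraint
  have hpt : ∀ t : ℝ, 0 < t →
      ENNReal.ofReal (δ/2) * ν (Ioi t)
        ≤ ENNReal.ofReal (δ * Real.exp (δ * t)) * ∫⁻ s in Ioi t, g s ∂ν := by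
    intro t ht
    rw [hIt t ht.le]
    rw [show ν (Ioi t) = ENNReal.ofReal ((ν (Ioi t)).toReal) from
      (ENNReal.ofReal_toReal (measure_ne_top ν _)).symm]
    rw [← ENNReal.ofReal_mul (by positivity), ← ENNReal.ofReal_mul (by positivity)]
    apply ENNReal.ofReal_le_ofReal
    have hcon := h t ht.le
    have hmul := mul_le_mul_of_nonneg_left hcon (by positivity : (0:ℝ) ≤ δ * Real.exp (δ * t))
    calc δ/2 * (ν (Ioi t)).toReal
        = δ * Real.exp (δ * t) * (1/2 * Real.exp (-δ * t) * (ν (Ioi t)).toReal) := by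
          rw [show -δ * t = -(δ*t) by ring, Real.exp_neg]
          field_simp
      _ ≤ _ := hmul
  -- Tonelli
  set F : ℝ → ℝ → ℝ≥0∞ := fun t s =>
    ({p : ℝ × ℝ | p.1 < p.2}).indicator
      (fun p => ENNReal.ofReal (δ * Real.exp (δ * p.1)) * g p.2) (t, s) with hF
  have hFmeas : Measurable (fun z : ℝ × ℝ => F z.1 z.2) := by
    have m1 : Measurable fun p : ℝ × ℝ => ENNReal.ofReal (δ * Real.exp (δ * p.1)) :=
      Measurable.ennreal_ofReal (by fun_prop)
    have hind : (fun z : ℝ × ℝ => F z.1 z.2) =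
        ({p : ℝ × ℝ | p.1 < p.2}).indicator
          (fun p => ENNReal.ofReal (δ * Real.exp (δ * p.1)) * g p.2) := by
      funext z; rfl
    rw [hind]
    exact (m1.mul (hgmeas.comp measurable_snd)).indicator
      (measurableSet_lt measurable_fst measurable_snd)
  have hF1 : ∀ t : ℝ, ∫⁻ s, F t s ∂ν
      = ENNReal.ofReal (δ * Real.exp (δ * t)) * ∫⁻ s in Ioi t, g s ∂ν := by
    intro t
    have : ∀ s : ℝ, F t s = ENNReal.ofReal (δ * Real.exp (δ * t)) * (Ioi t).indicator g s := by
      intro s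
      by_cases hts : t < s
      · simp [hF, indicator, hts]
      · simp [hF, indicator, hts]
    simp_rw [this]
    rw [lintegral_const_mul' _ _ ENNReal.ofReal_ne_top, lintegral_indicator measurableSet_Ioi]
  have hF2 : ∀ s : ℝ, ∫⁻ t in Ioi (0:ℝ), F t s
      = g s * ENNReal.ofReal (Real.exp (δ * s) - 1) := by
    intro s
    have : ∀ t : ℝ, F t s
        = (Iio s).indicator (fun t => ENNReal.ofReal (δ * Real.exp (δ * t)) * g s) t := by
      intro t
      by_cases hts : t < s
      · simp [hF, indicator, hts]
      · simp [hF, indicator, hts]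
    simp_rw [this]
    rw [lintegral_indicator measurableSet_Iio, Measure.restrict_restrict measurableSet_Iio,
      Iio_inter_Ioi, lintegral_mul_const' _ _ ENNReal.ofReal_ne_top,
      my_fin_int δ s hδ, mul_comm]
  have hA : ∫⁻ t in Ioi (0:ℝ), ENNReal.ofReal (δ * Real.exp (δ * t)) * ∫⁻ s in Ioi t, g s ∂ν
      = ∫⁻ s, g s * ENNReal.ofReal (Real.exp (δ * s) - 1) ∂ν := by
    calc ∫⁻ t in Ioi (0:ℝ), ENNReal.ofReal (δ * Real.exp (δ * t)) * ∫⁻ s in Ioi t, g s ∂ν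
        = ∫⁻ t in Ioi (0:ℝ), ∫⁻ s, F t s ∂ν := by
          exact lintegral_congr fun t => (hF1 t).symm
      _ = ∫⁻ s, (∫⁻ t in Ioi (0:ℝ), F t s) ∂ν := by
          exact lintegral_lintegral_swap (μ := volume.restrict (Ioi (0:ℝ))) (ν := ν)
            (f := F) (Measurable.aemeasurable hFmeas :
              AEMeasurable (Function.uncurry F) ((volume.restrict (Ioi (0:ℝ))).prod ν))
      _ = ∫⁻ s, g s * ENNReal.ofReal (Real.exp (δ * s) - 1) ∂ν := by
          exact lintegral_congr fun s => hF2 s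
  -- rewrite the integrand of A
  have hA2 : ∫⁻ s, g s * ENNReal.ofReal (Real.exp (δ * s) - 1) ∂ν
      = ∫⁻ s, ENNReal.ofReal (1 - Real.exp (-δ * s)) ∂ν := by
    apply lintegral_congr; intro s
    rw [hg]
    rw [← ENNReal.ofReal_mul (Real.exp_pos _).le]
    congr 1
    rw [show -δ*s = -(δ*s) by ring, Real.exp_neg]
    have hne := (Real.exp_pos (δ*s)).ne'
    field_simp
  have hA3 : ∫⁻ s, ENNReal.ofReal (1 - Real.exp (-δ * s)) ∂ν
      = ∫⁻ s in Ioi (0:ℝ), ENNReal.ofReal (1 - Real.exp (-δ * s)) ∂ν := by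
    rw [← lintegral_add_compl (fun s => ENNReal.ofReal (1 - Real.exp (-δ * s)))
      (measurableSet_Ioi (a := (0:ℝ)))]
    have hz : ∀ s ∈ (Ioi (0:ℝ))ᶜ, ENNReal.ofReal (1 - Real.exp (-δ * s)) = (0:ℝ≥0∞) := by
      intro s hs
      simp only [compl_Ioi, mem_Iic] at hs
      rw [ENNReal.ofReal_eq_zero]
      have : (1:ℝ) ≤ Real.exp (-δ * s) := by
        rw [← Real.exp_zero]
        exact Real.exp_le_exp.2 (by nlinarith)
      linarith
    rw [setLIntegral_congr_fun (measurableSet_Ioi (a := (0:ℝ))).compl hz]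
    simp
  have hsum : ∫⁻ s in Ioi (0:ℝ), g s ∂ν
      + ∫⁻ s in Ioi (0:ℝ), ENNReal.ofReal (1 - Real.exp (-δ * s)) ∂ν = ν (Ioi 0) := by
    rw [← lintegral_add_left hgmeas]
    have hone : ∀ s ∈ Ioi (0:ℝ),
        g s + ENNReal.ofReal (1 - Real.exp (-δ * s)) = (1:ℝ≥0∞) := by
      intro s hs
      have hle1 : Real.exp (-δ * s) ≤ 1 := by
        rw [← Real.exp_zero]
        have : (0:ℝ) < s := hs
        exact Real.exp_le_exp.2 (by nlinarith)
      rw [hg, ← ENNReal.ofReal_add (Real.exp_pos _).le (by linarith)]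
      norm_num
    rw [setLIntegral_congr_fun measurableSet_Ioi hone]
    simp
  have h0 : ENNReal.ofReal (1/2) * ν (Ioi 0) ≤ ∫⁻ s in Ioi (0:ℝ), g s ∂ν := by
    rw [hIt 0 le_rfl]
    rw [show ν (Ioi (0:ℝ)) = ENNReal.ofReal ((ν (Ioi 0)).toReal) from
      (ENNReal.ofReal_toReal (measure_ne_top ν _)).symm]
    rw [← ENNReal.ofReal_mul (by norm_num)]
    apply ENNReal.ofReal_le_ofReal
    have := h 0 le_rfl
    simpa using this
  have hw : ENNReal.ofReal (δ/2) * L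
      ≤ ∫⁻ t in Ioi (0:ℝ), ENNReal.ofReal (δ * Real.exp (δ * t)) * ∫⁻ s in Ioi t, g s ∂ν := by
    rw [hL, ← lintegral_const_mul' _ _ ENNReal.ofReal_ne_top]
    apply lintegral_mono_ae
    exact (ae_restrict_iff' measurableSet_Ioi).2 (ae_of_all _ fun t ht => hpt t ht)
  have hmain : ENNReal.ofReal (1/2) * ν (Ioi 0) + ENNReal.ofReal (δ/2) * L ≤ ν (Ioi 0) := by
    calc ENNReal.ofReal (1/2) * ν (Ioi 0) + ENNReal.ofReal (δ/2) * L
        ≤ ∫⁻ s in Ioi (0:ℝ), g s ∂ν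
          + ∫⁻ s in Ioi (0:ℝ), ENNReal.ofReal (1 - Real.exp (-δ * s)) ∂ν :=
          add_le_add h0 (hw.trans_eq (hA.trans (hA2.trans hA3)))
      _ = ν (Ioi 0) := hsum
  have hhalf : ENNReal.ofReal (δ/2) * L ≤ ENNReal.ofReal (1/2) := by
    have hid : ν (Ioi 0) = ENNReal.ofReal (1/2) * ν (Ioi 0)
        + ENNReal.ofReal (1/2) * ν (Ioi 0) := by
      rw [← add_mul, ← ENNReal.ofReal_add (by norm_num) (by norm_num)]
      norm_num
    have hfin : ENNReal.ofReal (1/2) * ν (Ioi 0) ≠ ⊤ :=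
      ENNReal.mul_ne_top ENNReal.ofReal_ne_top (measure_ne_top ν _)
    nth_rewrite 2 [hid] at hmain
    have hle : ENNReal.ofReal (δ/2) * L ≤ ENNReal.ofReal (1/2) * ν (Ioi 0) :=
      (ENNReal.add_le_add_iff_left hfin).1 hmain
    calc ENNReal.ofReal (δ/2) * L ≤ ENNReal.ofReal (1/2) * ν (Ioi 0) := hle
      _ ≤ ENNReal.ofReal (1/2) * 1 := mul_le_mul_right prob_le_one _
      _ = ENNReal.ofReal (1/2) := mul_one _
  rw [hlayer]
  have h2 : ENNReal.ofReal (2/δ) * (ENNReal.ofReal (δ/2) * L)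
      ≤ ENNReal.ofReal (2/δ) * ENNReal.ofReal (1/2) := mul_le_mul_right hhalf _
  rw [← mul_assoc, ← ENNReal.ofReal_mul (by positivity), ← ENNReal.ofReal_mul (by positivity),
    show (2/δ) * (δ/2) = (1:ℝ) by field_simp,
    show (2/δ) * (1/2 : ℝ) = 1/δ by ring] at h2
  simpa using h2
end Part1


/-- **Optimal revelation time in the simple example with an undiscounted principal.**
If `ν` is a Borel probability measure on `[0,∞)` (the distribution of the revelation
time) such that for every `t ≥ 0` the agent's obedience constraint
`∫_{(t,∞)} e^{-δ s} dν ≥ (1/2) e^{-δ t} ν((t,∞))` holds, then the expected revelation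
time is at most `1/δ`; moreover the exponential distribution with rate `δ` satisfies
every constraint with equality and attains expected revelation time `1/δ`. -/
theorem simple_example_undiscounted_principal (δ : ℝ) (hδ : 0 < δ) :
    (∀ ν : Measure ℝ, IsProbabilityMeasure ν → ν (Iio 0) = 0 →
      (∀ t : ℝ, 0 ≤ t →
        (1/2 : ℝ) * Real.exp (-δ * t) * (ν (Ioi t)).toReal
          ≤ ∫ s in Ioi t, Real.exp (-δ * s) ∂ν) →
      ∫⁻ s, ENNReal.ofReal s ∂ν ≤ ENNReal.ofReal (1/δ)) ∧
    (let νexp : Measure ℝ :=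
      (volume.restrict (Ioi (0:ℝ))).withDensity fun s => ENNReal.ofReal (δ * Real.exp (-δ * s))
     IsProbabilityMeasure νexp ∧ νexp (Iio 0) = 0 ∧
     (∀ t : ℝ, 0 ≤ t →
        (1/2 : ℝ) * Real.exp (-δ * t) * (νexp (Ioi t)).toReal
          = ∫ s in Ioi t, Real.exp (-δ * s) ∂νexp) ∧
     ∫⁻ s, ENNReal.ofReal s ∂νexp = ENNReal.ofReal (1/δ)) := by
  constructor
  · intro ν hprob hno hcon
    exact part1_main δ hδ ν hprob hno hcon
  · intro νexp
    refine ⟨nuexp_prob δ hδ, nuexp_Iio δ hδ, fun t ht => ?_, nuexp_moment δ hδ⟩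
    rw [nuexp_constraint δ hδ t ht, nuexp_Ioi δ t ht hδ,
      ENNReal.toReal_ofReal (Real.exp_pos _).le]
    rw [mul_assoc, ← Real.exp_add]
    congr 2
    ring

end
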